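/- Let f : ℝ^n → ℝ be continuously differentiable, η > 0, and let {x_k} be a sequence converging to a critical point x_* with f(x_k) ≥ f(x_*) for all k, satisfying for each k the sufficient decrease f(x_{k+1}) ≤ f(x_k) − η α_k ‖∇f(x_k)‖², the step-length identity ‖x_{k+1} − x_k‖ = 2 α_k ‖∇f(x_k)‖ / √(1 + α_k² ‖∇f(x_k)‖²), the step-size bounds 0 < α_min ≤ α_k ≤ α_max, and the gradient bound ‖∇f(x_k)‖ ≤ M. Suppose f satisfies the Kurdyka–Łojasiewicz inequality at x_* with exponent θ ∈ (0, 1/2]: there are a neighborhood U of x_* containing all x_k and a constant C₁ > 0 with |f(x) − f(x_*)|^θ ≤ C₁ ‖∇f(x)‖ for all x ∈ U. Then the sequence converges at least R-linearly: there exist γ > 0 and ϱ ∈ (0,1) such that ‖x_k − x_*‖ ≤ γ ϱ^k for all k. -/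

import Mathlib

open Filter

set_option maxHeartbeats 1000000 in
/-- under the Kurdyka–Łojasiewicz inequality with exponent
`θ ∈ (0, 1/2]`, the iterates converge at least R-linearly:
`‖x_k − x⋆‖ ≤ γ ϱ^k` for some `γ > 0` and `ϱ ∈ (0,1)`. -/
theorem kl_linear_convergence_rate
    {n : ℕ} (f : EuclideanSpace ℝ (Fin n) → ℝ)
    (hf : ContDiff ℝ 1 f)
    (η αmin αmax M : ℝ) (hη : 0 < η) (hαmin : 0 < αmin)
    (x : ℕ → EuclideanSpace ℝ (Fin n)) (α : ℕ → ℝ)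
    (xstar : EuclideanSpace ℝ (Fin n))
    (hlim : Tendsto x atTop (nhds xstar))
    (hcrit : gradient f xstar = 0)
    (hxf : ∀ k, f xstar ≤ f (x k))
    (hdec : ∀ k, f (x (k + 1)) ≤ f (x k) - η * α k * ‖gradient f (x k)‖ ^ 2)
    (hstep : ∀ k, ‖x (k + 1) - x k‖
      = 2 * α k * ‖gradient f (x k)‖
          / Real.sqrt (1 + (α k) ^ 2 * ‖gradient f (x k)‖ ^ 2))
    (hα : ∀ k, αmin ≤ α k) (hα' : ∀ k, α k ≤ αmax)
    (hgM : ∀ k, ‖gradient f (x k)‖ ≤ M)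
    (θ : ℝ) (hθ : θ ∈ Set.Ioc (0 : ℝ) (1 / 2))
    (U : Set (EuclideanSpace ℝ (Fin n))) (hU : U ∈ nhds xstar)
    (hxU : ∀ k, x k ∈ U)
    (C₁ : ℝ) (hC₁ : 0 < C₁)
    (hKL : ∀ y ∈ U, |f y - f xstar| ^ θ ≤ C₁ * ‖gradient f y‖) :
    ∃ γ > (0 : ℝ), ∃ ϱ ∈ Set.Ioo (0 : ℝ) 1,
      ∀ k, ‖x k - xstar‖ ≤ γ * ϱ ^ k := by

  obtain ⟨hθ0, hθ2⟩ := hθ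
  set g : ℕ → ℝ := fun k => ‖gradient f (x k)‖ with hg
  set e : ℕ → ℝ := fun k => f (x k) - f xstar with he
  have hαmax : 0 < αmax := lt_of_lt_of_le hαmin ((hα 0).trans (hα' 0))
  have he0 : ∀ k, 0 ≤ e k := fun k => sub_nonneg.2 (hxf k)
  have hαk : ∀ k, 0 < α k := fun k => lt_of_lt_of_le hαmin (hα k)
  have hg0 : ∀ k, 0 ≤ g k := fun k => norm_nonneg _
  have hdec' : ∀ k, e (k + 1) ≤ e k - η * α k * g k ^ 2 := by
    intro k
    have := hdec k
    simp only [he, hg]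
    linarith
  have h5' : ∀ k, η * αmin * g k ^ 2 ≤ η * α k * g k ^ 2 := by
    intro k
    exact mul_le_mul_of_nonneg_right
      (mul_le_mul_of_nonneg_left (hα k) hη.le) (sq_nonneg (g k))
  have hmono : ∀ k, e (k + 1) ≤ e k := by
    intro k
    have h1 := hdec' k
    have h2 : 0 ≤ η * α k * g k ^ 2 :=
      mul_nonneg (mul_nonneg hη.le (hαk k).le) (sq_nonneg _)
    linarith
  have hanti : Antitone e := antitone_nat_of_succ_le hmono
  have htend : Tendsto e atTop (nhds 0) := by
    have h1 : Tendsto (fun k => f (x k)) atTop (nhds (f xstar)) :=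
      (hf.continuous.tendsto xstar).comp hlim
    have := h1.sub_const (f xstar)
    simpa using this
  obtain ⟨k0, hk0⟩ : ∃ k0, e k0 ≤ 1 :=
    (htend.eventually (eventually_le_nhds (by norm_num : (0:ℝ) < 1))).exists
  have hek1 : ∀ k, k0 ≤ k → e k ≤ 1 := fun k hk => (hanti hk).trans hk0
  have hKLk : ∀ k, e k ^ θ ≤ C₁ * g k := by
    intro k
    have := hKL (x k) (hxU k)
    rwa [abs_of_nonneg (he0 k)] at this
  set c : ℝ := min (η * αmin / C₁ ^ 2) (1 / 2) with hc
  have hc0 : 0 < c := lt_min (by positivity) (by norm_num)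
  have hc2 : c ≤ 1 / 2 := min_le_right _ _
  set ρ : ℝ := 1 - c with hρ
  have hρ0 : 0 < ρ := by simp only [hρ]; linarith
  have hρ1 : ρ < 1 := by simp only [hρ]; linarith
  have hrec : ∀ k, k0 ≤ k → e (k + 1) ≤ ρ * e k := by
    intro k hk
    have h1 := hKLk k
    have hrnn : 0 ≤ e k ^ θ := Real.rpow_nonneg (he0 k) θ
    have h2 : (e k ^ θ) ^ 2 ≤ C₁ ^ 2 * g k ^ 2 := by nlinarith [hg0 k]
    have h4 : e k ≤ (e k ^ θ) ^ 2 := by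
      rcases eq_or_lt_of_le (he0 k) with h | h
      · rw [← h, Real.zero_rpow (ne_of_gt hθ0)]
        norm_num
      · calc e k = e k ^ (1:ℝ) := (Real.rpow_one _).symm
          _ ≤ e k ^ (θ + θ) :=
              Real.rpow_le_rpow_of_exponent_ge h (hek1 k hk) (by linarith)
          _ = e k ^ θ * e k ^ θ := Real.rpow_add h θ θ
          _ = (e k ^ θ) ^ 2 := (sq _).symm
    have h6 : e (k + 1) ≤ e k - η * αmin * g k ^ 2 :=
      le_trans (hdec' k) (by have := h5' k; linarith)
    have h7 : c * e k ≤ η * αmin * g k ^ 2 := by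
      have hcle : c ≤ η * αmin / C₁ ^ 2 := min_le_left _ _
      have h8 : e k ≤ C₁ ^ 2 * g k ^ 2 := le_trans h4 h2
      have h9 : (η * αmin / C₁ ^ 2) * (C₁ ^ 2 * g k ^ 2) = η * αmin * g k ^ 2 := by
        field_simp
      calc c * e k ≤ (η * αmin / C₁ ^ 2) * (C₁ ^ 2 * g k ^ 2) :=
            mul_le_mul hcle h8 (he0 k) (by positivity)
        _ = η * αmin * g k ^ 2 := h9
    simp only [hρ]; linarith
  set A : ℝ := max (e 0) 1 / ρ ^ k0 with hA
  have hA0 : 0 < A :=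
    div_pos (lt_of_lt_of_le one_pos (le_max_right _ _)) (pow_pos hρ0 k0)
  have hgeo : ∀ k, e k ≤ A * ρ ^ k := by
    intro k
    rcases le_or_gt k0 k with hk | hk
    · obtain ⟨m, rfl⟩ := Nat.exists_eq_add_of_le hk
      have key : ∀ m, e (k0 + m) ≤ ρ ^ m * e k0 := by
        intro m
        induction m with
        | zero => simp
        | succ m ih =>
          have h1 : e (k0 + m + 1) ≤ ρ * e (k0 + m) :=
            hrec (k0 + m) (Nat.le_add_right _ _)
          have h2 : ρ * e (k0 + m) ≤ ρ * (ρ ^ m * e k0) :=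
            mul_le_mul_of_nonneg_left ih hρ0.le
          calc e (k0 + (m + 1)) = e (k0 + m + 1) := by ring_nf
            _ ≤ ρ * (ρ ^ m * e k0) := le_trans h1 h2
            _ = ρ ^ (m + 1) * e k0 := by ring
      have h1 := key m
      have h2 : e k0 ≤ max (e 0) 1 := le_trans (hanti (Nat.zero_le k0)) (le_max_left _ _)
      have h3 : A * ρ ^ (k0 + m) = ρ ^ m * max (e 0) 1 := by
        rw [hA, pow_add]
        field_simp
      calc e (k0 + m) ≤ ρ ^ m * e k0 := h1
        _ ≤ ρ ^ m * max (e 0) 1 := mul_le_mul_of_nonneg_left h2 (by positivity)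
        _ = A * ρ ^ (k0 + m) := h3.symm
    · have h1 : e k ≤ max (e 0) 1 := le_trans (hanti (Nat.zero_le k)) (le_max_left _ _)
      have h2 : ρ ^ k0 ≤ ρ ^ k := pow_le_pow_of_le_one hρ0.le hρ1.le hk.le
      have h3 : max (e 0) 1 ≤ A * ρ ^ k := by
        rw [hA, div_mul_eq_mul_div, le_div_iff₀ (pow_pos hρ0 k0)]
        have h4 : 0 ≤ max (e 0) 1 := le_trans zero_le_one (le_max_right _ _)
        nlinarith
      linarith
  set σ : ℝ := Real.sqrt ρ with hσ
  have hσ0 : 0 < σ := Real.sqrt_pos.2 hρ0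
  have hσ1 : σ < 1 := by
    have := Real.sqrt_lt_sqrt hρ0.le hρ1
    simpa [hσ] using this
  have hsp : ∀ k : ℕ, Real.sqrt (ρ ^ k) = σ ^ k := by
    intro k
    have h1 : (σ ^ k) ^ 2 = ρ ^ k := by
      rw [← pow_mul, mul_comm k 2, pow_mul, hσ, Real.sq_sqrt hρ0.le]
    rw [← h1, Real.sqrt_sq (pow_nonneg hσ0.le k)]
  set B : ℝ := Real.sqrt (A / (η * αmin)) with hB
  have hB0 : 0 < B := Real.sqrt_pos.2 (by positivity)
  have hgb : ∀ k, g k ≤ B * σ ^ k := by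
    intro k
    have h1 : η * αmin * g k ^ 2 ≤ e k := by
      have h6 := hdec' k
      have h7 := he0 (k + 1)
      have := h5' k
      linarith
    have h2 : g k ^ 2 ≤ A / (η * αmin) * ρ ^ k := by
      rw [div_mul_eq_mul_div, le_div_iff₀ (by positivity)]
      have := hgeo k
      nlinarith
    calc g k = Real.sqrt (g k ^ 2) := (Real.sqrt_sq (hg0 k)).symm
      _ ≤ Real.sqrt (A / (η * αmin) * ρ ^ k) := Real.sqrt_le_sqrt h2
      _ = B * σ ^ k := by
          rw [Real.sqrt_mul (by positivity), hB, hsp k]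
  have hstepb : ∀ k, dist (x k) (x (k + 1)) ≤ (2 * αmax * B) * σ ^ k := by
    intro k
    rw [dist_comm, dist_eq_norm]
    have hs1 : (1:ℝ) ≤ Real.sqrt (1 + (α k) ^ 2 * g k ^ 2) :=
      Real.one_le_sqrt.2 (by nlinarith [sq_nonneg (α k * g k)])
    have hN : 0 ≤ 2 * α k * g k :=
      mul_nonneg (mul_nonneg (by norm_num) (hαk k).le) (hg0 k)
    have h2 : ‖x (k + 1) - x k‖ ≤ 2 * α k * g k := by
      rw [hstep k]
      exact div_le_self hN hs1
    have h3 : 2 * α k * g k ≤ 2 * αmax * g k :=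
      mul_le_mul_of_nonneg_right
        (mul_le_mul_of_nonneg_left (hα' k) (by norm_num)) (hg0 k)
    have h4 : 2 * αmax * g k ≤ 2 * αmax * (B * σ ^ k) :=
      mul_le_mul_of_nonneg_left (hgb k) (by positivity)
    calc ‖x (k + 1) - x k‖ ≤ 2 * α k * g k := h2
      _ ≤ 2 * αmax * (B * σ ^ k) := le_trans h3 h4
      _ = (2 * αmax * B) * σ ^ k := by ring
  refine ⟨2 * αmax * B / (1 - σ),
    div_pos (mul_pos (mul_pos two_pos hαmax) hB0) (by linarith), σ, ⟨hσ0, hσ1⟩, fun k => ?_⟩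
  have hfin := dist_le_of_le_geometric_of_tendsto σ (2 * αmax * B) hσ1 hstepb hlim k
  rw [dist_eq_norm] at hfin
  calc ‖x k - xstar‖ ≤ 2 * αmax * B * σ ^ k / (1 - σ) := hfin
    _ = 2 * αmax * B / (1 - σ) * σ ^ k := by ring
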